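/- An (n,k,q)-MDS code C is extendable to an (n+1,k,q)-MDS code if and only if there exists a partition {C₁,...,C_q} of C into q parts such that each part C_i, viewed as a set of n-tuples, is an (n,k-1,q)-MDS code. -/

import Mathlib

/-- An `(n,k,q)`-MDS code over an alphabet `A` of size `q`: a set of `q^k` words of
length `n` such that no two distinct words agree in as many as `k` coordinates. -/
def IsMDS (q k : ℕ) {n : ℕ} {A : Type*} [DecidableEq A] (C : Finset (Fin n → A)) : Prop :=
  C.card = q ^ k ∧ ∀ w ∈ C, ∀ v ∈ C, w ≠ v →
    (Finset.univ.filter fun i => w i = v i).card < k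

private lemma card_agree_snoc {n : ℕ} {A : Type*} [DecidableEq A]
    (w v : Fin n → A) (a b : A) :
    (Finset.univ.filter fun i : Fin (n + 1) =>
        (Fin.snoc w a : Fin (n + 1) → A) i = (Fin.snoc v b : Fin (n + 1) → A) i).card =
      (Finset.univ.filter fun i => w i = v i).card + (if a = b then 1 else 0) := by
  rw [Finset.card_filter, Finset.card_filter, Fin.sum_univ_castSucc]
  simp [Fin.snoc_castSucc, Fin.snoc_last]

/-- An `(n,k+1,q)`-MDS code is extendable to an `(n+1,k+1,q)`-MDS code (deleting the last
coordinate of the extension recovers the code) if and only if it admits a partition into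
`q` parts, each of which is an `(n,k,q)`-MDS code. -/
theorem mds_extendable_iff_partition (n k q : ℕ) (A : Type*) [DecidableEq A] [Fintype A]
    (hA : Fintype.card A = q)
    (C : Finset (Fin n → A)) (hC : IsMDS q (k + 1) C) :
    (∃ C' : Finset (Fin (n + 1) → A), IsMDS q (k + 1) C' ∧
        C'.image (fun w => w ∘ Fin.castSucc) = C) ↔
    (∃ P : Fin q → Finset (Fin n → A),
        (∀ i, IsMDS q k (P i)) ∧
        (∀ i j, i ≠ j → Disjoint (P i) (P j)) ∧
        (Finset.univ : Finset (Fin q)).biUnion P = C) := by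
  obtain ⟨hCcard, hCdist⟩ := hC
  have e : Fin q ≃ A := (Fintype.equivFinOfCardEq hA).symm
  constructor
  · -- Forward direction
    rintro ⟨C', ⟨hC'card, hC'dist⟩, himg⟩
    rcases Nat.lt_or_ge q 2 with hq | hq2
    · -- degenerate cases q = 0, 1
      interval_cases q
      · refine ⟨Fin.elim0, fun i => i.elim0, fun i j _ => i.elim0, ?_⟩
        have hC0 : C = ∅ := Finset.card_eq_zero.mp (by simpa using hCcard)
        simp [hC0]
      · have hsub : Subsingleton A := by
          refine Fintype.card_le_one_iff_subsingleton.mp (by omega)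
        refine ⟨fun _ => C, fun i => ⟨by simpa using hCcard, ?_⟩,
          fun i j hij => absurd (Subsingleton.elim i j) hij, by ext x; simp⟩
        intro w hw v hv hne
        exact absurd (funext fun i => Subsingleton.elim _ _) hne
    · -- main case q ≥ 2
      set res : (Fin (n + 1) → A) → (Fin n → A) := fun w => w ∘ Fin.castSucc with hres
      have hinj : Set.InjOn res C' := by
        rw [← Finset.card_image_iff]
        rw [himg, hCcard, hC'card]
      have hkn1 : k + 1 ≤ n := by
        have hle : q ^ (k + 1) ≤ q ^ n := by
          rw [← hCcard]
          have := Finset.card_le_univ C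
          simpa [Fintype.card_fun, hA] using this
        exact (Nat.pow_le_pow_iff_right hq2).mp hle
      have hkn : k ≤ n := by omega
      set P : Fin q → Finset (Fin n → A) :=
        fun i => (C'.filter fun w' => w' (Fin.last n) = e i).image res with hP
      -- distance property of each part
      have hdist : ∀ i, ∀ w ∈ P i, ∀ v ∈ P i, w ≠ v →
          (Finset.univ.filter fun j => w j = v j).card < k := by
        intro i w hw v hv hne
        obtain ⟨w', hw', rfl⟩ := Finset.mem_image.mp hw
        obtain ⟨v', hv', rfl⟩ := Finset.mem_image.mp hv
        obtain ⟨hw'C, hw'last⟩ := Finset.mem_filter.mp hw'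
        obtain ⟨hv'C, hv'last⟩ := Finset.mem_filter.mp hv'
        have hne' : w' ≠ v' := fun h => hne (by rw [h])
        have key := hC'dist w' hw'C v' hv'C hne'
        have hsplit : (Finset.univ.filter fun j => w' j = v' j).card =
            (Finset.univ.filter fun j => res w' j = res v' j).card + 1 := by
          have h2 := card_agree_snoc (Fin.init w') (Fin.init v')
            (w' (Fin.last n)) (v' (Fin.last n))
          rw [Fin.snoc_init_self, Fin.snoc_init_self] at h2
          rw [h2, hw'last, hv'last, if_pos rfl]
          rfl
        rw [hsplit] at key
        omega
      -- injectivity of projection to the first k coordinates on each part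
      have hproj : ∀ i, Set.InjOn (fun w : Fin n → A => w ∘ Fin.castLE hkn) (P i) := by
        intro i w hw v hv hgv
        by_contra hne
        have hk_le : k ≤ (Finset.univ.filter fun j => w j = v j).card := by
          have hsub : (Finset.univ : Finset (Fin k)).image (Fin.castLE hkn) ⊆
              Finset.univ.filter fun j => w j = v j := by
            intro j hj
            obtain ⟨j₀, _, rfl⟩ := Finset.mem_image.mp hj
            refine Finset.mem_filter.mpr ⟨Finset.mem_univ _, ?_⟩
            exact congrFun hgv j₀
          calc k = ((Finset.univ : Finset (Fin k)).image (Fin.castLE hkn)).card := by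
                rw [Finset.card_image_of_injective _ (Fin.castLE_injective hkn)]
                simp
            _ ≤ _ := Finset.card_le_card hsub
        exact absurd (hdist i w hw v hv hne) (by omega)
      -- cardinality of each part
      have hPcard_fib : ∀ i, (P i).card =
          (C'.filter fun w' => w' (Fin.last n) = e i).card := by
        intro i
        exact Finset.card_image_of_injOn
          (hinj.mono (Finset.coe_subset.mpr (Finset.filter_subset _ C')))
      have hPle : ∀ i, (P i).card ≤ q ^ k := by
        intro i
        have h1 : (P i).card = ((P i).image fun w : Fin n → A => w ∘ Fin.castLE hkn).card :=
          (Finset.card_image_of_injOn (hproj i)).symm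
        rw [h1]
        calc _ ≤ Fintype.card (Fin k → A) := Finset.card_le_univ _
          _ = q ^ k := by simp [Fintype.card_fun, hA]
      have hsum : ∑ i : Fin q, (P i).card = q ^ (k + 1) := by
        have hfib := Finset.card_eq_sum_card_fiberwise
          (f := fun w' : Fin (n + 1) → A => e.symm (w' (Fin.last n)))
          (s := C') (t := Finset.univ) (fun x _ => Finset.mem_univ _)
        rw [hC'card] at hfib
        rw [← hfib.symm]
        refine Finset.sum_congr rfl fun i _ => ?_
        rw [hPcard_fib i]
        congr 1
        apply Finset.filter_congr
        intro x _
        simp [Equiv.symm_apply_eq]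
      have hPcard : ∀ i, (P i).card = q ^ k := by
        by_contra hcon
        push_neg at hcon
        obtain ⟨i₀, hi₀⟩ := hcon
        have hlt : ∑ i : Fin q, (P i).card < ∑ _i : Fin q, q ^ k :=
          Finset.sum_lt_sum (fun i _ => hPle i)
            ⟨i₀, Finset.mem_univ _, lt_of_le_of_ne (hPle i₀) hi₀⟩
        rw [hsum] at hlt
        rw [Finset.sum_const, Finset.card_univ, Fintype.card_fin, smul_eq_mul,
          ← pow_succ'] at hlt
        exact lt_irrefl _ hlt
      refine ⟨P, fun i => ⟨hPcard i, hdist i⟩, ?_, ?_⟩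
      · -- disjointness
        intro i j hij
        rw [Finset.disjoint_left]
        intro x hxi hxj
        obtain ⟨w', hw', hweq⟩ := Finset.mem_image.mp hxi
        obtain ⟨v', hv', hveq⟩ := Finset.mem_image.mp hxj
        obtain ⟨hw'C, hw'last⟩ := Finset.mem_filter.mp hw'
        obtain ⟨hv'C, hv'last⟩ := Finset.mem_filter.mp hv'
        have : w' = v' := hinj hw'C hv'C (by rw [hweq, hveq])
        exact hij (e.injective (by rw [← hw'last, ← hv'last, this]))
      · -- union
        ext x
        simp only [Finset.mem_biUnion, Finset.mem_univ, true_and, hP,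
          Finset.mem_image, Finset.mem_filter]
        constructor
        · rintro ⟨i, w', ⟨hw'C, _⟩, rfl⟩
          rw [← himg]
          exact Finset.mem_image_of_mem _ hw'C
        · intro hx
          rw [← himg] at hx
          obtain ⟨w', hw'C, rfl⟩ := Finset.mem_image.mp hx
          exact ⟨e.symm (w' (Fin.last n)), w', ⟨hw'C, (e.apply_symm_apply _).symm⟩, rfl⟩
  · -- Reverse direction
    rintro ⟨P, hPmds, hPdisj, hPunion⟩
    have hsnoc_inj : ∀ i : Fin q, Function.Injective
        (fun w : Fin n → A => Fin.snoc w (e i) : (Fin n → A) → (Fin (n + 1) → A)) := by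
      intro i w v h
      have := congrArg Fin.init h
      simpa [Fin.init_snoc] using this
    refine ⟨Finset.univ.biUnion
      (fun i => (P i).image (fun w : Fin n → A =>
        (Fin.snoc w (e i) : Fin (n + 1) → A))), ⟨?_, ?_⟩, ?_⟩
    · -- cardinality
      rw [Finset.card_biUnion]
      · have : ∀ i ∈ (Finset.univ : Finset (Fin q)),
            ((P i).image (fun w : Fin n → A =>
              (Fin.snoc w (e i) : Fin (n + 1) → A))).card = q ^ k := by
          intro i _
          rw [Finset.card_image_of_injective _ (hsnoc_inj i), (hPmds i).1]
        rw [Finset.sum_congr rfl this]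
        simp [pow_succ, mul_comm]
      · intro i _ j _ hij
        rw [Function.onFun, Finset.disjoint_left]
        rintro x hxi hxj
        obtain ⟨w, _, rfl⟩ := Finset.mem_image.mp hxi
        obtain ⟨v, _, hveq⟩ := Finset.mem_image.mp hxj
        have : e j = e i := by
          have := congrFun hveq (Fin.last n)
          simpa [Fin.snoc_last] using this
        exact hij (e.injective this.symm)
    · -- distance
      intro x hx y hy hxy
      obtain ⟨i, _, hxim⟩ := Finset.mem_biUnion.mp hx
      obtain ⟨j, _, hyim⟩ := Finset.mem_biUnion.mp hy
      obtain ⟨w, hw, rfl⟩ := Finset.mem_image.mp hxim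
      obtain ⟨v, hv, rfl⟩ := Finset.mem_image.mp hyim
      rw [card_agree_snoc]
      by_cases hij : i = j
      · subst hij
        have hwv : w ≠ v := fun h => hxy (by rw [h])
        have := (hPmds i).2 w hw v hv hwv
        rw [if_pos rfl]
        omega
      · have heij : e i ≠ e j := fun h => hij (e.injective h)
        rw [if_neg heij]
        have hwv : w ≠ v := by
          intro h
          subst h
          exact (Finset.disjoint_left.mp (hPdisj i j hij) hw) hv
        have hwC : w ∈ C := by
          rw [← hPunion]; exact Finset.mem_biUnion.mpr ⟨i, Finset.mem_univ _, hw⟩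
        have hvC : v ∈ C := by
          rw [← hPunion]; exact Finset.mem_biUnion.mpr ⟨j, Finset.mem_univ _, hv⟩
        have := hCdist w hwC v hvC hwv
        omega
    · -- image
      rw [Finset.biUnion_image]
      rw [← hPunion]
      refine Finset.biUnion_congr rfl fun i _ => ?_
      rw [Finset.image_image]
      refine Finset.image_congr ?_ |>.trans (Finset.image_id)
      intro w _
      funext j
      simp [Function.comp, Fin.snoc_castSucc]
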